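/- Let R be a semiartinian ring with socle sequence (S_α)_{α ≤ σ+1}. For any right R-module M and any ordinal α ≤ σ, the quotient M·S_{α+1}/M·S_α is isomorphic to a direct sum of simple modules each of which is a direct summand of S_{α+1}/S_α (i.e., an α-th layer simple module of R). -/

import Mathlib

universe u

open Submodule

/-- The socle of a module: the supremum of all simple submodules. -/
noncomputable def socle (R : Type u) [Ring R] (M : Type u) [AddCommGroup M] [Module R M] :
    Submodule R M :=
  sSup {S : Submodule R M | IsAtom S}

/-- The Loewy (socle) sequence of a module, defined by transfinite recursion:
`loewy R M 0 = ⊥`, `loewy R M (α+1) / loewy R M α = Soc (M ⧸ loewy R M α)`, and unions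
at limit ordinals. -/
noncomputable def loewy (R : Type u) [Ring R] (M : Type u) [AddCommGroup M] [Module R M]
    (o : Ordinal.{u}) : Submodule R M :=
  o.limitRecOn ⊥ (fun _ N => (socle R (M ⧸ N)).comap N.mkQ)
    (fun o _ IH => ⨆ (b : Ordinal) (h : b < o), IH b h)

/-- The Loewy length of a module: the least ordinal `o` with `loewy R M o = ⊤`. -/
noncomputable def loewyLength (R : Type u) [Ring R] (M : Type u) [AddCommGroup M]
    [Module R M] : Ordinal.{u} :=
  sInf {o : Ordinal | loewy R M o = ⊤}

/-- A ring is semiartinian if every nonzero module has a nonzero socle. -/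
def IsSemiartinianRing (R : Type u) [Ring R] : Prop :=
  ∀ (M : Type u) [AddCommGroup M] [Module R M], Nontrivial M → socle R M ≠ ⊥

/-- A ring is von Neumann regular if for every `r` there is `s` with `r * s * r = r`. -/
def IsVonNeumannRegularRing (R : Type u) [Ring R] : Prop :=
  ∀ r : R, ∃ s : R, r * s * r = r

/-- `R` has primitive factors artinian: for every primitive ideal `P` (= annihilator of a
simple module), the factor `R/P` is artinian. -/
def HasPrimitiveFactorsArtinian (R : Type u) [Ring R] : Prop :=
  ∀ (M : Type u) [AddCommGroup M] [Module R M], IsSimpleModule R M →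
    IsArtinian R (R ⧸ (Module.annihilator R M : Submodule R R))

/-- The `α`-th layer of the Loewy sequence of `R`, as a submodule of `R ⧸ loewy R R α`. -/
noncomputable def loewyLayer (R : Type u) [Ring R] (α : Ordinal.{u}) :
    Submodule R (R ⧸ loewy R R α) :=
  (loewy R R (α + 1)).map (loewy R R α).mkQ

/-- The canonical projection `π_α : S_{α+1} → S_{α+1}/S_α`. -/
noncomputable def layerProj (R : Type u) [Ring R] (α : Ordinal.{u}) :
    (loewy R R (α + 1) : Submodule R R) →ₗ[R] (loewyLayer R α) :=
  LinearMap.codRestrict _ ((loewy R R α).mkQ.comp (loewy R R (α + 1)).subtype)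
    (fun x => ⟨(x : R), x.2, rfl⟩)

/-- `M` is weakly `R`-projective: every homomorphism from `M` to a layer `S_{α+1}/S_α`
(`0 < α`) with finitely generated image factors through `π_α : S_{α+1} → S_{α+1}/S_α`. -/
def IsWeaklyRProjective (R : Type u) [Ring R] (M : Type u) [AddCommGroup M]
    [Module R M] : Prop :=
  ∀ α : Ordinal.{u}, 0 < α →
    ∀ φ : M →ₗ[R] (loewyLayer R α), (LinearMap.range φ).FG →
      ∃ ψ : M →ₗ[R] (loewy R R (α + 1) : Submodule R R), (layerProj R α).comp ψ = φ

/-- `M` is layer projective: for each `0 < α`, every simple submodule of the `α`-th layer of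
`M` is isomorphic to a simple (direct summand) submodule of the `α`-th layer of `R`, i.e. the
`α`-th layer of `M` is a projective `R/S_α`-module. -/
def IsLayerProjective (R : Type u) [Ring R] (M : Type u) [AddCommGroup M]
    [Module R M] : Prop :=
  ∀ α : Ordinal.{u}, 0 < α →
    ∀ T : Submodule R ((loewy R M (α + 1)).map (loewy R M α).mkQ), IsAtom T →
      ∃ T' : Submodule R (loewyLayer R α), IsAtom T' ∧ Nonempty (T ≃ₗ[R] T')

/-- The submodule `M·S` of `M`, generated by all products `s • m` with `s ∈ S`. -/
def smulSub (R : Type u) [Ring R] (M : Type u) [AddCommGroup M] [Module R M]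
    (S : Submodule R R) : Submodule R M :=
  Submodule.span R {x : M | ∃ s ∈ S, ∃ m : M, s • m = x}


section Aux

variable (R : Type u) [Ring R] (M : Type u) [AddCommGroup M] [Module R M]

/-- The socle of any module is semisimple. -/
theorem socle_isSemisimple : IsSemisimpleModule R (socle R M) := by
  have h : socle R M = ⨆ S ∈ {S : Submodule R M | IsAtom S}, S := sSup_eq_iSup
  rw [socle] at *
  rw [h]
  exact isSemisimpleModule_biSup_of_isSemisimpleModule_submodule fun S hS => by
    haveI := isSimpleModule_iff_isAtom.mpr hS
    infer_instance

theorem loewy_succ (α : Ordinal.{u}) :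
    loewy R M (α + 1) = (socle R (M ⧸ loewy R M α)).comap (loewy R M α).mkQ := by
  rw [loewy, Ordinal.add_one_eq_succ, Ordinal.limitRecOn_succ]
  rfl

theorem loewyLayer_eq_socle (α : Ordinal.{u}) :
    loewyLayer R α = socle R (R ⧸ loewy R R α) := by
  rw [loewyLayer, loewy_succ, Submodule.map_comap_eq_self]
  rw [Submodule.range_mkQ]
  exact le_top

theorem loewyLayer_isSemisimple (α : Ordinal.{u}) :
    IsSemisimpleModule R (loewyLayer R α) := by
  rw [loewyLayer_eq_socle]
  exact socle_isSemisimple R _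

theorem layerProj_surjective (α : Ordinal.{u}) :
    Function.Surjective (layerProj R α) := by
  rintro ⟨y, hy⟩
  obtain ⟨x, hx, hxy⟩ := Submodule.mem_map.mp hy
  exact ⟨⟨x, hx⟩, Subtype.ext hxy⟩

theorem smulSub_eq_iSup (S : Submodule R R) :
    smulSub R M S = ⨆ m : M, S.map (LinearMap.toSpanSingleton R M m) := by
  apply le_antisymm
  · rw [smulSub, Submodule.span_le]
    rintro x ⟨s, hs, m, rfl⟩
    exact Submodule.mem_iSup_of_mem m ⟨s, hs, rfl⟩
  · exact iSup_le fun m => Submodule.map_le_iff_le_comap.mpr fun s hs =>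
      Submodule.subset_span ⟨s, hs, m, rfl⟩

/-- The map `S_{α+1} → M ⧸ M·S_α`, `s ↦ s • m mod M·S_α`. -/
noncomputable def gMap (α : Ordinal.{u}) (m : M) :
    (loewy R R (α + 1) : Submodule R R) →ₗ[R] (M ⧸ smulSub R M (loewy R R α)) :=
  (smulSub R M (loewy R R α)).mkQ ∘ₗ (LinearMap.toSpanSingleton R M m) ∘ₗ
    (loewy R R (α + 1)).subtype

theorem ker_layerProj_le (α : Ordinal.{u}) (m : M) :
    LinearMap.ker (layerProj R α) ≤ LinearMap.ker (gMap R M α m) := by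
  intro x hx
  have hx0 : ((layerProj R α x : loewyLayer R α) : R ⧸ loewy R R α) = 0 := by
    rw [LinearMap.mem_ker.mp hx]; rfl
  replace hx0 : Submodule.Quotient.mk (p := loewy R R α) (x : R) = 0 := hx0
  rw [Submodule.Quotient.mk_eq_zero] at hx0
  have hmem : (x : R) • m ∈ smulSub R M (loewy R R α) :=
    Submodule.subset_span ⟨x, hx0, m, rfl⟩
  show ((smulSub R M (loewy R R α)).mkQ ∘ₗ (LinearMap.toSpanSingleton R M m) ∘ₗ
      (loewy R R (α + 1)).subtype) x = 0
  rw [LinearMap.comp_apply, LinearMap.comp_apply, Submodule.subtype_apply,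
    LinearMap.toSpanSingleton_apply, Submodule.mkQ_apply, Submodule.Quotient.mk_eq_zero]
  exact hmem

/-- The induced map `S_{α+1}/S_α → M ⧸ M·S_α`. -/
noncomputable def layerMap (α : Ordinal.{u}) (m : M) :
    (loewyLayer R α : Submodule R (R ⧸ loewy R R α)) →ₗ[R]
      (M ⧸ smulSub R M (loewy R R α)) :=
  ((LinearMap.ker (layerProj R α)).liftQ (gMap R M α m) (ker_layerProj_le R M α m)) ∘ₗ
    (LinearMap.quotKerEquivOfSurjective (layerProj R α)
      (layerProj_surjective R α)).symm.toLinearMap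

theorem range_layerMap (α : Ordinal.{u}) (m : M) :
    LinearMap.range (layerMap R M α m) = LinearMap.range (gMap R M α m) := by
  rw [layerMap, LinearMap.range_comp, LinearEquiv.range, Submodule.map_top,
    Submodule.range_liftQ]

theorem quot_eq_iSup_range (α : Ordinal.{u}) :
    (smulSub R M (loewy R R (α + 1))).map (smulSub R M (loewy R R α)).mkQ
      = ⨆ m : M, LinearMap.range (layerMap R M α m) := by
  conv_lhs => rw [smulSub_eq_iSup R M (loewy R R (α + 1))]
  rw [Submodule.map_iSup]
  refine iSup_congr fun m => ?_
  rw [range_layerMap, gMap, LinearMap.range_comp, LinearMap.range_comp,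
    Submodule.range_subtype]

end Aux

/-- For a semiartinian ring `R` with socle sequence `(S_α)_{α ≤ σ+1}` and any module `M`,
the quotient `M·S_{α+1}/M·S_α` is a direct sum of simple modules, each isomorphic to a simple
direct summand of the layer `S_{α+1}/S_α`. -/
theorem smul_layer_isSemisimple_of_semiartinian
    (R : Type u) [Ring R] (hsa : IsSemiartinianRing R)
    (σ : Ordinal.{u}) (hlen : loewy R R (σ + 1) = ⊤)
    (M : Type u) [AddCommGroup M] [Module R M]
    (α : Ordinal.{u}) (hα : α ≤ σ) :
    IsSemisimpleModule R
      ((smulSub R M (loewy R R (α + 1))).map (smulSub R M (loewy R R α)).mkQ) ∧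
    ∀ T : Submodule R
        ((smulSub R M (loewy R R (α + 1))).map (smulSub R M (loewy R R α)).mkQ),
      IsAtom T → ∃ T' : Submodule R (loewyLayer R α), IsAtom T' ∧ Nonempty (T ≃ₗ[R] T') := by
  classical
  have hQeq := quot_eq_iSup_range R M α
  set Q := (smulSub R M (loewy R R (α + 1))).map (smulSub R M (loewy R R α)).mkQ with hQdef
  haveI hLss : IsSemisimpleModule R (loewyLayer R α) := loewyLayer_isSemisimple R α
  have hle : ∀ m : M, LinearMap.range (layerMap R M α m) ≤ Q := fun m =>
    hQeq ▸ le_iSup (fun m => LinearMap.range (layerMap R M α m)) m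
  have part1 : IsSemisimpleModule R Q := by
    show IsSemisimpleModule R
      ((smulSub R M (loewy R R (α + 1))).map (smulSub R M (loewy R R α)).mkQ)
    rw [show (smulSub R M (loewy R R (α + 1))).map (smulSub R M (loewy R R α)).mkQ
      = ⨆ m : M, LinearMap.range (layerMap R M α m) from hQeq, ← iSup_univ (f := fun m => LinearMap.range (layerMap R M α m))]
    exact isSemisimpleModule_biSup_of_isSemisimpleModule_submodule fun m _ =>
      IsSemisimpleModule.range _
  refine ⟨part1, fun T hT => ?_⟩
  haveI := part1
  haveI hTs : IsSimpleModule R T := isSimpleModule_iff_isAtom.mpr hT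
  obtain ⟨C, hC⟩ := exists_isCompl T
  set pr := Submodule.linearProjOfIsCompl T C hC with hprdef
  set h' : M → ((loewyLayer R α : Submodule R (R ⧸ loewy R R α)) →ₗ[R] Q) := fun m =>
    (layerMap R M α m).codRestrict Q (fun x => hle m ⟨x, rfl⟩) with hh'
  have htop : (⨆ m : M, LinearMap.range (h' m)) = ⊤ := by
    apply Submodule.map_injective_of_injective Q.injective_subtype
    rw [Submodule.map_iSup, Submodule.map_top, Submodule.range_subtype]
    have : ∀ m : M, Submodule.map Q.subtype (LinearMap.range (h' m))
        = LinearMap.range (layerMap R M α m) := fun m => by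
      rw [← LinearMap.range_comp, hh', LinearMap.subtype_comp_codRestrict]
    simp_rw [this]
    exact hQeq.symm
  have hex : ∃ m, pr ∘ₗ h' m ≠ 0 := by
    by_contra hcon
    push_neg at hcon
    have hker : ∀ m, LinearMap.range (h' m) ≤ LinearMap.ker pr := by
      rintro m _ ⟨x, rfl⟩
      have hx := LinearMap.congr_fun (hcon m) x
      rw [LinearMap.comp_apply, LinearMap.zero_apply] at hx
      exact LinearMap.mem_ker.mpr hx
    have hktop : LinearMap.ker pr = ⊤ := top_unique (htop ▸ iSup_le hker)
    obtain ⟨t, htT, ht0⟩ := Submodule.ne_bot_iff T |>.mp hT.1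
    have h1 : pr t = ⟨t, htT⟩ :=
      Submodule.linearProjOfIsCompl_apply_left hC ⟨t, htT⟩
    have h2 : pr t = 0 := LinearMap.mem_ker.mp (hktop ▸ Submodule.mem_top)
    exact ht0 (congrArg Subtype.val (h1.symm.trans h2))
  obtain ⟨m, hm⟩ := hex
  set f := pr ∘ₗ h' m with hfdef
  have hrange : LinearMap.range f = ⊤ := by
    rcases hTs.toIsSimpleOrder.eq_bot_or_eq_top (LinearMap.range f) with h | h
    · exact absurd (LinearMap.range_eq_bot.mp h) hm
    · exact h
  obtain ⟨K, hK⟩ := exists_isCompl (LinearMap.ker f)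
  set fK := f ∘ₗ K.subtype with hfK
  have hinj : Function.Injective fK := by
    refine (LinearMap.ker_eq_bot (M := K) (M₂ := T) (f := fK)).mp ?_
    rw [hfK, LinearMap.ker_comp]
    rw [Submodule.eq_bot_iff]
    rintro x hx
    have : (x : (loewyLayer R α : Submodule R (R ⧸ loewy R R α))) ∈
        LinearMap.ker f ⊓ K := ⟨hx, x.2⟩
    rw [hK.inf_eq_bot] at this
    exact Subtype.ext this
  have hsurjK : Function.Surjective fK := by
    rw [← LinearMap.range_eq_top, hfK, LinearMap.range_comp, Submodule.range_subtype]
    have h1 : Submodule.map f (LinearMap.ker f ⊔ K) = Submodule.map f ⊤ := by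
      rw [hK.sup_eq_top]
    rw [Submodule.map_sup, Submodule.map_top, hrange] at h1
    have h2 : Submodule.map f (LinearMap.ker f) = ⊥ := by
      rw [Submodule.eq_bot_iff]
      intro y hy
      obtain ⟨x, hx, rfl⟩ := Submodule.mem_map.mp hy
      exact LinearMap.mem_ker.mp hx
    rw [h2, bot_sup_eq] at h1
    exact h1
  let e : K ≃ₗ[R] T := LinearEquiv.ofBijective fK ⟨hinj, hsurjK⟩
  haveI hKs : IsSimpleModule R K := @IsSimpleModule.congr R _ K _ _ T _ _ e hTs
  exact ⟨K, isSimpleModule_iff_isAtom.mp hKs, ⟨e.symm⟩⟩
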